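/- Let X, U ∈ ℝ^{n×r} with dist(U, X) ≤ (1/4)‖X‖_{op}. Then ‖UUᵀ − XXᵀ‖_F ≤ (9/4)·‖X‖_{op}·dist(U, X). -/

import Mathlib

open Matrix

noncomputable def vnorm {ι : Type*} [Fintype ι] (v : ι → ℝ) : ℝ :=
  Real.sqrt (∑ i, v i ^ 2)

noncomputable def frob {α β : Type*} [Fintype α] [Fintype β] (M : Matrix α β ℝ) : ℝ :=
  Real.sqrt (∑ i, ∑ j, M i j ^ 2)

noncomputable def sval {α β : Type*} [Fintype α] [Fintype β] (M : Matrix α β ℝ) (k : ℕ) : ℝ :=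
  sSup { t : ℝ | ∃ V : Submodule ℝ (β → ℝ), Module.finrank ℝ V = k ∧
    ∀ v ∈ V, t * vnorm v ≤ vnorm (M.mulVec v) }

noncomputable def opNorm {α β : Type*} [Fintype α] [Fintype β] (M : Matrix α β ℝ) : ℝ :=
  sval M 1

noncomputable def pdist {α ρ : Type*} [Fintype α] [Fintype ρ] [DecidableEq ρ]
    (U X : Matrix α ρ ℝ) : ℝ :=
  sInf { d : ℝ | ∃ R : Matrix ρ ρ ℝ, Rᵀ * R = 1 ∧ d = frob (U - X * R) }

noncomputable def mip {α β : Type*} [Fintype α] [Fintype β] (A B : Matrix α β ℝ) : ℝ :=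
  ∑ i, ∑ j, A i j * B i j

noncomputable def mapA {m : ℕ} {α β : Type*} [Fintype α] [Fintype β]
    (A : Fin m → Matrix α β ℝ) (Z : Matrix α β ℝ) : Fin m → ℝ :=
  fun k => mip (A k) Z

def HasRIP {m n₁ n₂ : ℕ} (A : Fin m → Matrix (Fin n₁) (Fin n₂) ℝ) (s : ℕ) (δ : ℝ) : Prop :=
  ∀ Z : Matrix (Fin n₁) (Fin n₂) ℝ, Z.rank ≤ s →
    (1 - δ) * frob Z ^ 2 ≤ ∑ k, mapA A Z k ^ 2 ∧
      ∑ k, mapA A Z k ^ 2 ≤ (1 + δ) * frob Z ^ 2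

noncomputable def gradU {m n₁ n₂ r : ℕ} (A : Fin m → Matrix (Fin n₁) (Fin n₂) ℝ)
    (M : Matrix (Fin n₁) (Fin n₂) ℝ)
    (U : Matrix (Fin n₁) (Fin r) ℝ) (V : Matrix (Fin n₂) (Fin r) ℝ) :
    Matrix (Fin n₁) (Fin r) ℝ :=
  (∑ k, mip (A k) (U * Vᵀ - M) • (A k * V)) + (1 / 4 : ℝ) • (U * (Uᵀ * U - Vᵀ * V))

noncomputable def gradV {m n₁ n₂ r : ℕ} (A : Fin m → Matrix (Fin n₁) (Fin n₂) ℝ)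
    (M : Matrix (Fin n₁) (Fin n₂) ℝ)
    (U : Matrix (Fin n₁) (Fin r) ℝ) (V : Matrix (Fin n₂) (Fin r) ℝ) :
    Matrix (Fin n₂) (Fin r) ℝ :=
  (∑ k, mip (A k) (U * Vᵀ - M) • ((A k)ᵀ * U)) + (1 / 4 : ℝ) • (V * (Vᵀ * V - Uᵀ * U))

noncomputable def gradg {m n₁ n₂ r : ℕ} (A : Fin m → Matrix (Fin n₁) (Fin n₂) ℝ)
    (M : Matrix (Fin n₁) (Fin n₂) ℝ)
    (U : Matrix (Fin n₁) (Fin r) ℝ) (V : Matrix (Fin n₂) (Fin r) ℝ) :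
    Matrix (Fin n₁ ⊕ Fin n₂) (Fin r) ℝ :=
  Matrix.fromRows (gradU A M U V) (gradV A M U V)

section AuxFrob
set_option linter.unusedSectionVars false
variable {α β γ ρ : Type*} [Fintype α] [Fintype β] [Fintype γ] [Fintype ρ] [DecidableEq ρ]

lemma vnorm_nonneg (v : α → ℝ) : 0 ≤ vnorm v := Real.sqrt_nonneg _
lemma frob_nonneg (M : Matrix α β ℝ) : 0 ≤ frob M := Real.sqrt_nonneg _
lemma vnorm_sq (v : α → ℝ) : vnorm v ^ 2 = ∑ i, v i ^ 2 := Real.sq_sqrt (by positivity)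
lemma frob_sq (M : Matrix α β ℝ) : frob M ^ 2 = ∑ i, ∑ j, M i j ^ 2 := Real.sq_sqrt (by positivity)

lemma vnorm_pos {v : α → ℝ} (hv : v ≠ 0) : 0 < vnorm v := by
  rcases (vnorm_nonneg v).lt_or_eq with h | h
  · exact h
  · exfalso; apply hv
    have hz : ∑ i, v i ^ 2 = 0 := le_antisymm
      ((Real.sqrt_eq_zero' (x := ∑ i, v i ^ 2)).mp h.symm) (by positivity)
    funext i
    have := (Finset.sum_eq_zero_iff_of_nonneg (fun i _ => sq_nonneg (v i))).mp hz i
      (Finset.mem_univ i)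
    exact pow_eq_zero_iff (n := 2) (by norm_num) |>.mp this

lemma vnorm_smul (c : ℝ) (v : α → ℝ) : vnorm (c • v) = |c| * vnorm v := by
  unfold vnorm
  rw [← Real.sqrt_sq_eq_abs, ← Real.sqrt_mul (sq_nonneg c), Finset.mul_sum]
  congr 1
  exact Finset.sum_congr rfl fun i _ => by simp [mul_pow]

lemma vnorm_mulVec_le (M : Matrix α β ℝ) (v : β → ℝ) :
    vnorm (M.mulVec v) ≤ frob M * vnorm v := by
  have h2 : ∑ i, (M.mulVec v) i ^ 2 ≤ (∑ i, ∑ j, M i j ^ 2) * ∑ j, v j ^ 2 := by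
    rw [Finset.sum_mul]
    exact Finset.sum_le_sum fun i _ => Finset.sum_mul_sq_le_sq_mul_sq _ _ _
  calc vnorm (M.mulVec v) ≤ Real.sqrt ((∑ i, ∑ j, M i j ^ 2) * ∑ j, v j ^ 2) :=
        Real.sqrt_le_sqrt h2
    _ = frob M * vnorm v := Real.sqrt_mul (by positivity) _

lemma opNorm_bddAbove (M : Matrix α β ℝ) :
    BddAbove { t : ℝ | ∃ V : Submodule ℝ (β → ℝ), Module.finrank ℝ V = 1 ∧
      ∀ v ∈ V, t * vnorm v ≤ vnorm (M.mulVec v) } := by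
  refine ⟨frob M, fun t ht => ?_⟩
  obtain ⟨V, hV1, hV⟩ := ht
  obtain ⟨v, hvV, hv0⟩ : ∃ v ∈ V, v ≠ 0 := by
    by_contra hc
    push_neg at hc
    have : V = ⊥ := by
      ext x; simp only [Submodule.mem_bot]
      exact ⟨fun hx => hc x hx, fun hx => hx ▸ V.zero_mem⟩
    rw [this] at hV1; simp at hV1
  have hvpos : 0 < vnorm v := vnorm_pos hv0
  have h1 := hV v hvV
  have h2 := vnorm_mulVec_le M v
  nlinarith [vnorm_nonneg (M.mulVec v)]

lemma ratio_mem (M : Matrix α β ℝ) (v : β → ℝ) (hv : v ≠ 0) :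
    vnorm (M.mulVec v) / vnorm v ∈ { t : ℝ | ∃ V : Submodule ℝ (β → ℝ),
      Module.finrank ℝ V = 1 ∧ ∀ v ∈ V, t * vnorm v ≤ vnorm (M.mulVec v) } := by
  have hvn := vnorm_pos hv
  refine ⟨Submodule.span ℝ {v}, finrank_span_singleton hv, fun w hw => ?_⟩
  obtain ⟨c, rfl⟩ := Submodule.mem_span_singleton.mp hw
  rw [Matrix.mulVec_smul, vnorm_smul, vnorm_smul]
  have : (vnorm (M.mulVec v) / vnorm v) * (|c| * vnorm v) = |c| * vnorm (M.mulVec v) := by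
    field_simp
  exact this.le

lemma opNorm_mulVec_le [Nonempty β] (M : Matrix α β ℝ) (v : β → ℝ) :
    vnorm (M.mulVec v) ≤ opNorm M * vnorm v := by
  by_cases hv : v = 0
  · subst hv
    have h1 : vnorm (M.mulVec (0 : β → ℝ)) = 0 := by simp [vnorm]
    have h2 : vnorm (0 : β → ℝ) = 0 := by simp [vnorm]
    rw [h1, h2, mul_zero]
  · have hvn := vnorm_pos hv
    have hle : vnorm (M.mulVec v) / vnorm v ≤ opNorm M :=
      le_csSup (opNorm_bddAbove M) (ratio_mem M v hv)
    calc vnorm (M.mulVec v) = (vnorm (M.mulVec v) / vnorm v) * vnorm v := by field_simp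
      _ ≤ opNorm M * vnorm v := mul_le_mul_of_nonneg_right hle hvn.le

lemma opNorm_nonneg [Nonempty β] (M : Matrix α β ℝ) : 0 ≤ opNorm M := by
  have hv : (fun _ => (1:ℝ) : β → ℝ) ≠ 0 := by
    intro h
    have := congrFun h (Classical.arbitrary β)
    simp at this
  refine le_csSup (opNorm_bddAbove M) ?_
  exact ⟨Submodule.span ℝ {(fun _ => (1:ℝ) : β → ℝ)}, finrank_span_singleton hv,
    fun w _ => by rw [zero_mul]; exact vnorm_nonneg _⟩

lemma vnorm_mulVec_orth (R : Matrix ρ ρ ℝ) (hR : Rᵀ * R = 1) (v : ρ → ℝ) :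
    vnorm (R.mulVec v) = vnorm v := by
  have key : (R.mulVec v) ⬝ᵥ (R.mulVec v) = v ⬝ᵥ v := by
    calc (R.mulVec v) ⬝ᵥ (R.mulVec v)
        = (R.mulVec v) ᵥ* R ⬝ᵥ v := (Matrix.dotProduct_mulVec _ _ _)
      _ = Rᵀ.mulVec (R.mulVec v) ⬝ᵥ v := by rw [Matrix.mulVec_transpose]
      _ = (Rᵀ * R).mulVec v ⬝ᵥ v := by rw [Matrix.mulVec_mulVec]
      _ = v ⬝ᵥ v := by rw [hR, Matrix.one_mulVec]
  unfold vnorm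
  congr 1
  have h1 : ∑ i, (R.mulVec v) i ^ 2 = (R.mulVec v) ⬝ᵥ (R.mulVec v) :=
    Finset.sum_congr rfl fun i _ => sq (R.mulVec v i)
  have h2 : ∑ i, v i ^ 2 = v ⬝ᵥ v := Finset.sum_congr rfl fun i _ => sq (v i)
  rw [h1, h2, key]

noncomputable def emb (M : Matrix α β ℝ) : EuclideanSpace ℝ (α × β) :=
  (WithLp.equiv 2 _).symm (fun p => M p.1 p.2)

lemma norm_emb (M : Matrix α β ℝ) : ‖emb M‖ = frob M := by
  rw [EuclideanSpace.norm_eq, frob]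
  congr 1
  rw [Fintype.sum_prod_type]
  simp [emb, sq_abs]

lemma frob_add_le (A B : Matrix α β ℝ) : frob (A + B) ≤ frob A + frob B := by
  have : emb (A + B) = emb A + emb B := rfl
  rw [← norm_emb, ← norm_emb, ← norm_emb, this]
  exact norm_add_le _ _

lemma frob_transpose (M : Matrix α β ℝ) : frob Mᵀ = frob M := by
  unfold frob
  rw [Finset.sum_comm]
  rfl

lemma frob_mul_le (A : Matrix α β ℝ) (B : Matrix β γ ℝ) :
    frob (A * B) ≤ frob A * frob B := by
  have h2 : ∑ i, ∑ j, (A * B) i j ^ 2 ≤ (∑ i, ∑ k, A i k ^ 2) * ∑ k, ∑ j, B k j ^ 2 := by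
    have step : ∀ i j, (A * B) i j ^ 2 ≤ (∑ k, A i k ^ 2) * ∑ k, B k j ^ 2 := fun i j => by
      have := Finset.sum_mul_sq_le_sq_mul_sq Finset.univ (fun k => A i k) (fun k => B k j)
      simpa [Matrix.mul_apply] using this
    calc ∑ i, ∑ j, (A * B) i j ^ 2
        ≤ ∑ i, ∑ j, (∑ k, A i k ^ 2) * ∑ k, B k j ^ 2 :=
          Finset.sum_le_sum fun i _ => Finset.sum_le_sum fun j _ => step i j
      _ = (∑ i, ∑ k, A i k ^ 2) * ∑ k, ∑ j, B k j ^ 2 := by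
          rw [Finset.sum_mul]
          refine Finset.sum_congr rfl fun i _ => ?_
          rw [← Finset.mul_sum, Finset.sum_comm]
  calc frob (A * B) ≤ Real.sqrt ((∑ i, ∑ k, A i k ^ 2) * ∑ k, ∑ j, B k j ^ 2) :=
        Real.sqrt_le_sqrt h2
    _ = frob A * frob B := Real.sqrt_mul (by positivity) _

/-- frob of `Δ * Bᵀ` bounded using an operator-type bound on `B`. -/
lemma frob_mul_transpose_le {N : ℝ} (hN : 0 ≤ N) (Δ : Matrix α ρ ℝ) (B : Matrix β ρ ℝ)
    (hB : ∀ v : ρ → ℝ, vnorm (B.mulVec v) ≤ N * vnorm v) :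
    frob (Δ * Bᵀ) ≤ N * frob Δ := by
  have key : ∑ i, ∑ j, (Δ * Bᵀ) i j ^ 2 ≤ N ^ 2 * ∑ i, ∑ k, Δ i k ^ 2 := by
    rw [Finset.mul_sum]
    refine Finset.sum_le_sum fun i _ => ?_
    have hrow : ∑ j, (Δ * Bᵀ) i j ^ 2 = vnorm (B.mulVec (fun k => Δ i k)) ^ 2 := by
      rw [vnorm_sq]
      refine Finset.sum_congr rfl fun j _ => ?_
      congr 1
      simp [Matrix.mul_apply, Matrix.mulVec, dotProduct, mul_comm]
    rw [hrow]
    have h1 := hB (fun k => Δ i k)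
    have h2 : (N * vnorm (fun k => Δ i k)) ^ 2 = N ^ 2 * ∑ k, Δ i k ^ 2 := by
      rw [mul_pow, vnorm_sq]
    calc vnorm (B.mulVec (fun k => Δ i k)) ^ 2
        ≤ (N * vnorm (fun k => Δ i k)) ^ 2 :=
          pow_le_pow_left₀ (vnorm_nonneg _) h1 2
      _ = N ^ 2 * ∑ k, Δ i k ^ 2 := h2
  calc frob (Δ * Bᵀ) ≤ Real.sqrt (N ^ 2 * ∑ i, ∑ k, Δ i k ^ 2) := Real.sqrt_le_sqrt key
    _ = N * frob Δ := by
        rw [Real.sqrt_mul (sq_nonneg N), Real.sqrt_sq hN, frob]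

end AuxFrob

lemma key_bound {n r : ℕ} [Nonempty (Fin r)] (X U : Matrix (Fin n) (Fin r) ℝ)
    (R : Matrix (Fin r) (Fin r) ℝ) (hR : Rᵀ * R = 1) :
    frob (U * Uᵀ - X * Xᵀ) ≤
      2 * opNorm X * frob (U - X * R) + frob (U - X * R) ^ 2 := by
  set B : Matrix (Fin n) (Fin r) ℝ := X * R with hB
  set Δ : Matrix (Fin n) (Fin r) ℝ := U - B with hΔ
  have hRRt : R * Rᵀ = 1 := mul_eq_one_comm.mp hR
  have hBBt : B * Bᵀ = X * Xᵀ := by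
    rw [hB, Matrix.transpose_mul, ← Matrix.mul_assoc, Matrix.mul_assoc X R Rᵀ, hRRt,
      Matrix.mul_one]
  have hUeq : U = B + Δ := by rw [hΔ]; abel
  have hid : U * Uᵀ - X * Xᵀ = Δ * Bᵀ + (B * Δᵀ + Δ * Δᵀ) := by
    rw [hUeq, ← hBBt, Matrix.transpose_add, Matrix.add_mul, Matrix.mul_add, Matrix.mul_add]
    abel
  have hN : 0 ≤ opNorm X := opNorm_nonneg X
  have hBop : ∀ v : Fin r → ℝ, vnorm (B.mulVec v) ≤ opNorm X * vnorm v := by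
    intro v
    rw [hB, ← Matrix.mulVec_mulVec]
    calc vnorm (X.mulVec (R.mulVec v)) ≤ opNorm X * vnorm (R.mulVec v) :=
          opNorm_mulVec_le X _
      _ = opNorm X * vnorm v := by rw [vnorm_mulVec_orth R hR]
  have h1 : frob (Δ * Bᵀ) ≤ opNorm X * frob Δ :=
    frob_mul_transpose_le hN Δ B hBop
  have h2 : frob (B * Δᵀ) ≤ opNorm X * frob Δ := by
    have : B * Δᵀ = (Δ * Bᵀ)ᵀ := by rw [Matrix.transpose_mul, Matrix.transpose_transpose]
    rw [this, frob_transpose]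
    exact h1
  have h3 : frob (Δ * Δᵀ) ≤ frob Δ ^ 2 := by
    calc frob (Δ * Δᵀ) ≤ frob Δ * frob Δᵀ := frob_mul_le Δ Δᵀ
      _ = frob Δ ^ 2 := by rw [frob_transpose, sq]
  calc frob (U * Uᵀ - X * Xᵀ) = frob (Δ * Bᵀ + (B * Δᵀ + Δ * Δᵀ)) := by rw [hid]
    _ ≤ frob (Δ * Bᵀ) + frob (B * Δᵀ + Δ * Δᵀ) := frob_add_le _ _
    _ ≤ frob (Δ * Bᵀ) + (frob (B * Δᵀ) + frob (Δ * Δᵀ)) := by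
        have := frob_add_le (B * Δᵀ) (Δ * Δᵀ); linarith
    _ ≤ opNorm X * frob Δ + (opNorm X * frob Δ + frob Δ ^ 2) := by linarith
    _ = 2 * opNorm X * frob Δ + frob Δ ^ 2 := by ring

/-- Bounding ‖UUᵀ − XXᵀ‖_F by dist(U, X). -/
theorem frob_diff_le_dist {n r : ℕ} (X U : Matrix (Fin n) (Fin r) ℝ)
    (h : pdist U X ≤ (1 / 4) * opNorm X) :
    frob (U * Uᵀ - X * Xᵀ) ≤ (9 / 4) * opNorm X * pdist U X := by
  rcases Nat.eq_zero_or_pos r with hr | hr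
  · -- r = 0 : everything is zero
    subst hr
    have hLHS : frob (U * Uᵀ - X * Xᵀ) = 0 := by
      simp [frob, Matrix.mul_apply, Matrix.sub_apply]
    have hS : { d : ℝ | ∃ R : Matrix (Fin 0) (Fin 0) ℝ, Rᵀ * R = 1 ∧
        d = frob (U - X * R) } = {0} := by
      ext d
      simp only [Set.mem_setOf_eq, Set.mem_singleton_iff]
      constructor
      · rintro ⟨R, -, rfl⟩
        simp [frob]
      · rintro rfl
        exact ⟨1, by simp, by simp [frob]⟩
    have hpd : pdist U X = 0 := by rw [pdist, hS, csInf_singleton]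
    rw [hLHS, hpd, mul_zero]
  · haveI : Nonempty (Fin r) := ⟨⟨0, hr⟩⟩
    set N := opNorm X with hNdef
    have hN : 0 ≤ N := opNorm_nonneg X
    set S := { d : ℝ | ∃ R : Matrix (Fin r) (Fin r) ℝ, Rᵀ * R = 1 ∧
      d = frob (U - X * R) } with hSdef
    have hSne : S.Nonempty := ⟨frob (U - X * 1), 1, by simp, rfl⟩
    set d := pdist U X with hddef
    have hd0 : 0 ≤ d := by
      rw [hddef, pdist]
      apply Real.sInf_nonneg
      rintro x ⟨R, -, rfl⟩
      exact frob_nonneg _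
    have hd4 : d ≤ N / 4 := by rw [hddef]; linarith [h]
    refine le_of_forall_pos_le_add fun ε hε => ?_
    set C : ℝ := 2 * N + 2 * d + 1 with hCdef
    have hC : 0 < C := by positivity
    set η : ℝ := min (ε / C) 1 with hηdef
    have hη : 0 < η := lt_min (div_pos hε hC) one_pos
    have hη1 : η ≤ 1 := min_le_right _ _
    have hηC : η * C ≤ ε := by
      have := min_le_left (ε / C) 1
      calc η * C ≤ (ε / C) * C := mul_le_mul_of_nonneg_right this hC.le
        _ = ε := by field_simp
    obtain ⟨δ, hδS, hδlt⟩ := Real.lt_sInf_add_pos hSne hη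
    obtain ⟨R, hR, rfl⟩ := hδS
    have hkey := key_bound X U R hR
    have hfn : 0 ≤ frob (U - X * R) := frob_nonneg _
    have hδd : frob (U - X * R) < d + η := by
      rw [hddef, pdist]; exact hδlt
    nlinarith [sq_nonneg (frob (U - X * R) - d), mul_nonneg hN hd0,
      mul_nonneg hη.le hN, mul_nonneg hη.le hd0, sq_nonneg η]
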